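/- Consider the 4×4 Hermitian matrix Δ_α(k) = diag(3,2,2,3) - A_α(k), where A_α(k) has rows (0, e^{iφ}, 1, e^{ik}), (e^{-iφ}, 0, 0, 1), (1, 0, 0, 1), (e^{-ik}, 1, 1, 0), for parameters φ, k ∈ ℝ. Then det(λI_4 - Δ_α(k)) = λ^4 - 10λ^3 + 32λ^2 + 2λ(cos k + cos(k-φ) - 18) - 4cos k - 4cos(k-φ) - 2cos φ + 10. In particular, when φ = π the characteristic polynomial is independent of k and the eigenvalues of Δ_α(k) are 2±√2 and 3±√3. -/

import Mathlib

private lemma my_det_fin_four (A : Matrix (Fin 4) (Fin 4) ℂ) :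
    A.det =
      A 0 0 * Matrix.det !![A 1 1, A 1 2, A 1 3; A 2 1, A 2 2, A 2 3; A 3 1, A 3 2, A 3 3]
      - A 0 1 * Matrix.det !![A 1 0, A 1 2, A 1 3; A 2 0, A 2 2, A 2 3; A 3 0, A 3 2, A 3 3]
      + A 0 2 * Matrix.det !![A 1 0, A 1 1, A 1 3; A 2 0, A 2 1, A 2 3; A 3 0, A 3 1, A 3 3]
      - A 0 3 * Matrix.det !![A 1 0, A 1 1, A 1 2; A 2 0, A 2 1, A 2 2; A 3 0, A 3 1, A 3 2] := by
  rw [Matrix.det_succ_row_zero, Fin.sum_univ_four]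
  norm_num [Matrix.det_fin_three, Matrix.submatrix_apply, Fin.succAbove, Fin.lt_def,
    show Fin.succ 2 = (3 : Fin 4) from rfl, show Fin.castSucc 2 = (2 : Fin 4) from rfl,
    show ((3 : Fin 4) : ℕ) = 3 from rfl]
  simp only [Matrix.cons_val]
  ring

set_option maxHeartbeats 1600000 in
/-- The characteristic polynomial of the 4×4 fiber magnetic Laplacian
`Δ_α(k) = diag(3,2,2,3) - A_α(k)` equals
`λ⁴ - 10λ³ + 32λ² + 2λ(cos k + cos(k-φ) - 18) - 4cos k - 4cos(k-φ) - 2cos φ + 10`;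
in particular for `φ = π` it is independent of `k` with roots `2±√2, 3±√3`. -/
theorem det_fiber_magnetic_laplacian (φ k : ℝ) (lam : ℂ) :
    let A : Matrix (Fin 4) (Fin 4) ℂ :=
      !![0, Complex.exp (Complex.I * φ), 1, Complex.exp (Complex.I * k);
         Complex.exp (-Complex.I * φ), 0, 0, 1;
         1, 0, 0, 1;
         Complex.exp (-Complex.I * k), 1, 1, 0]
    let Δ : Matrix (Fin 4) (Fin 4) ℂ := Matrix.diagonal ![3, 2, 2, 3] - A
    (Matrix.det (lam • (1 : Matrix (Fin 4) (Fin 4) ℂ) - Δ) =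
      lam ^ 4 - 10 * lam ^ 3 + 32 * lam ^ 2 +
        2 * lam * ((Real.cos k : ℂ) + (Real.cos (k - φ) : ℂ) - 18) -
        4 * (Real.cos k : ℂ) - 4 * (Real.cos (k - φ) : ℂ) - 2 * (Real.cos φ : ℂ) + 10) ∧
    (φ = Real.pi →
      Matrix.det (lam • (1 : Matrix (Fin 4) (Fin 4) ℂ) - Δ) =
        (lam - (2 + (Real.sqrt 2 : ℂ))) * (lam - (2 - (Real.sqrt 2 : ℂ))) *
        (lam - (3 + (Real.sqrt 3 : ℂ))) * (lam - (3 - (Real.sqrt 3 : ℂ)))) := by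
  intro A Δ
  have hc : ∀ z : ℂ, Complex.cos z
      = (Complex.exp (Complex.I * z) + Complex.exp (-Complex.I * z)) / 2 := by
    intro z
    rw [Complex.cos]
    ring_nf
  have ha : Complex.exp (Complex.I * φ) ≠ 0 := Complex.exp_ne_zero _
  have hb : Complex.exp (Complex.I * k) ≠ 0 := Complex.exp_ne_zero _
  have hna : Complex.exp (-Complex.I * φ) = (Complex.exp (Complex.I * φ))⁻¹ := by
    rw [← Complex.exp_neg]; ring_nf
  have hnb : Complex.exp (-Complex.I * k) = (Complex.exp (Complex.I * k))⁻¹ := by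
    rw [← Complex.exp_neg]; ring_nf
  have hkf : Complex.exp (Complex.I * ((k : ℂ) - (φ : ℂ)))
      = Complex.exp (Complex.I * k) * (Complex.exp (Complex.I * φ))⁻¹ := by
    rw [← hna, ← Complex.exp_add]; ring_nf
  have hkf2 : Complex.exp (-Complex.I * ((k : ℂ) - (φ : ℂ)))
      = Complex.exp (Complex.I * φ) * (Complex.exp (Complex.I * k))⁻¹ := by
    rw [← hnb, ← Complex.exp_add]; ring_nf
  have hdet : Matrix.det (lam • (1 : Matrix (Fin 4) (Fin 4) ℂ) - Δ) =
      lam ^ 4 - 10 * lam ^ 3 + 32 * lam ^ 2 +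
        2 * lam * ((Real.cos k : ℂ) + (Real.cos (k - φ) : ℂ) - 18) -
        4 * (Real.cos k : ℂ) - 4 * (Real.cos (k - φ) : ℂ) - 2 * (Real.cos φ : ℂ) + 10 := by
    rw [my_det_fin_four]
    simp only [Δ, A, Matrix.sub_apply, Matrix.smul_apply, Matrix.one_apply,
      Matrix.diagonal_apply, Matrix.cons_val', Matrix.cons_val_zero, Matrix.cons_val_one,
      Matrix.head_cons, Matrix.empty_val', Matrix.cons_val_fin_one, Matrix.head_fin_const,
      Matrix.cons_val_two, Matrix.tail_cons, Matrix.cons_val_three]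
    norm_num [Matrix.det_fin_three, Fin.ext_iff,
      show ((0 : Fin 4) : ℕ) = 0 from rfl, show ((1 : Fin 4) : ℕ) = 1 from rfl,
      show ((2 : Fin 4) : ℕ) = 2 from rfl, show ((3 : Fin 4) : ℕ) = 3 from rfl]
    simp only [Matrix.cons_val]
    rw [hc, hc, hc, hkf, hkf2, hna, hnb,
      show Complex.exp (-(Complex.I * (φ:ℂ))) = (Complex.exp (Complex.I * φ))⁻¹ from
        Complex.exp_neg _,
      show Complex.exp (-(Complex.I * (k:ℂ))) = (Complex.exp (Complex.I * k))⁻¹ from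
        Complex.exp_neg _]
    generalize hga : Complex.exp (Complex.I * (φ:ℂ)) = a at ha ⊢
    generalize hgb : Complex.exp (Complex.I * (k:ℂ)) = b at hb ⊢
    field_simp
    ring_nf

  refine ⟨hdet, fun hφ => ?_⟩
  rw [hdet, hφ]
  have h2 : ((Real.sqrt 2 : ℝ) : ℂ) ^ 2 = 2 := by
    norm_cast
    rw [Real.sq_sqrt] <;> norm_num
  have h3 : ((Real.sqrt 3 : ℝ) : ℂ) ^ 2 = 3 := by
    norm_cast
    rw [Real.sq_sqrt] <;> norm_num
  have hcpi : (Real.cos Real.pi : ℂ) = -1 := by rw [Real.cos_pi]; norm_num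
  have hck : (Real.cos (k - Real.pi) : ℂ) = -(Real.cos k : ℂ) := by
    rw [show k - Real.pi = -(Real.pi - k) by ring, Real.cos_neg, Real.cos_pi_sub]
    push_cast; ring
  rw [hcpi, hck]
  linear_combination (lam ^ 2 - 6 * lam + 6) * h2 +
    (lam ^ 2 - 4 * lam + 4 - ((Real.sqrt 2 : ℝ) : ℂ) ^ 2) * h3
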